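/- Let h_{1,1}, h_{2,1}, h_{2,2} > 0 and R > 0, and define W(a,b) = (e^R − 1)/b if b ≥ a; W(a,b) = e^R(e^R − 1)/a if b ≤ e^{−2R}a; and W(a,b) = 2e^R/√(ab) − e^R/a − 1/b if e^{−2R}a < b < a. Then the optimal value of the two-user hybrid-NOMA power minimization problem (minimize P_{1,1} + P_{2,1} + P_{2,2} over nonnegative powers subject to log(1 + h_{1,1}P_{1,1}) ≥ R and log(1 + h_{2,1}P_{2,1}/(1 + h_{1,1}P_{1,1})) + log(1 + h_{2,2}P_{2,2}) ≥ R) equals (e^R − 1)/h_{1,1} + W(h_{2,1}, h_{2,2}). -/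

import Mathlib

/-- Feasibility for the two-user hybrid-NOMA power minimization problem. -/
noncomputable def Feas2U (h11 h21 h22 R p11 p21 p22 : ℝ) : Prop :=
  0 ≤ p11 ∧ 0 ≤ p21 ∧ 0 ≤ p22 ∧
  R ≤ Real.log (1 + h11 * p11) ∧
  R ≤ Real.log (1 + h21 * p21 / (1 + h11 * p11)) + Real.log (1 + h22 * p22)

/-- User 2's minimal total transmit power as a function of its channel gains `a = h_{2,1}`,
`b = h_{2,2}`: pure OMA if `b ≥ a`, pure NOMA if `b ≤ e^{-2R} a`, hybrid NOMA otherwise. -/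
noncomputable def W (R a b : ℝ) : ℝ :=
  if a ≤ b then (Real.exp R - 1) / b
  else if b ≤ Real.exp (-(2 * R)) * a then Real.exp R * (Real.exp R - 1) / a
  else 2 * Real.exp R / Real.sqrt (a * b) - Real.exp R / a - 1 / b

lemma lbA {a b K x y : ℝ} (hb : 0 < b) (hK : 1 ≤ K)
    (hx : 0 ≤ x) (hy : 0 ≤ y) (h : K ≤ (1 + a*x) * (1 + b*y)) (hc : K*a ≤ b) :
    K - 1 ≤ b * (x + y) := by
  have h1 : K*a*x ≤ b*x := mul_le_mul_of_nonneg_right hc hx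
  nlinarith [sq_nonneg (K - 1 - b*y), mul_nonneg hy hb.le, mul_nonneg hx hb.le,
    mul_nonneg (mul_nonneg hy hb.le) (mul_nonneg hx hb.le)]

lemma lbB {a b K x y : ℝ} (ha : 0 < a) (hb : 0 < b)
    (hx : 0 ≤ 1 + a*x) (hy : 0 ≤ 1 + b*y) (h : K ≤ (1 + a*x) * (1 + b*y)) :
    2 * Real.sqrt (K / (a*b)) - 1/a - 1/b ≤ x + y := by
  set p := (1 + a*x)/a with hp
  set q := (1 + b*y)/b with hq
  have hp0 : 0 ≤ p := by positivity
  have hq0 : 0 ≤ q := by positivity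
  have h1 : Real.sqrt (K/(a*b)) ≤ Real.sqrt p * Real.sqrt q := by
    rw [← Real.sqrt_mul hp0]
    apply Real.sqrt_le_sqrt
    rw [hp, hq, div_mul_div_comm]
    gcongr
  have h2 : 2 * (Real.sqrt p * Real.sqrt q) ≤ p + q := by
    nlinarith [sq_nonneg (Real.sqrt p - Real.sqrt q), Real.sq_sqrt hp0, Real.sq_sqrt hq0]
  have h3 : p = x + 1/a := by rw [hp]; field_simp; ring
  have h4 : q = y + 1/b := by rw [hq]; field_simp; ring
  linarith

lemma feas_aux (h11 h21 h22 R p21 p22 : ℝ) (h1 : 0 < h11) (h2 : 0 < h21) (h3 : 0 < h22)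
    (hR : 0 < R) (hp21 : 0 ≤ p21) (hp22 : 0 ≤ p22)
    (hcon : Real.exp R ≤ (1 + h21 * p21 / Real.exp R) * (1 + h22 * p22)) :
    Feas2U h11 h21 h22 R ((Real.exp R - 1)/h11) p21 p22 := by
  have hE1 : 1 < Real.exp R := by
    calc (1:ℝ) = Real.exp 0 := Real.exp_zero.symm
    _ < Real.exp R := Real.exp_lt_exp.2 hR
  have hEpos : (0:ℝ) < Real.exp R := Real.exp_pos R
  have hfix : 1 + h11 * ((Real.exp R - 1)/h11) = Real.exp R := by field_simp; ring
  have ha0 : 0 < 1 + h21 * p21 / Real.exp R := by positivity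
  have hb0 : 0 < 1 + h22 * p22 := by positivity
  refine ⟨div_nonneg (by linarith) h1.le, hp21, hp22, ?_, ?_⟩
  · rw [hfix, Real.log_exp]
  · rw [hfix, ← Real.log_mul ha0.ne' hb0.ne']
    calc R = Real.log (Real.exp R) := (Real.log_exp R).symm
    _ ≤ _ := Real.log_le_log hEpos hcon

set_option maxHeartbeats 1000000 in
/-- The optimal value of the two-user hybrid-NOMA power minimization problem equals
`(e^R - 1)/h11 + W(h21, h22)`. -/
theorem stmt_7 (h11 h21 h22 R : ℝ) (h1 : 0 < h11) (h2 : 0 < h21) (h3 : 0 < h22) (hR : 0 < R) :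
    sInf {v | ∃ p11 p21 p22, Feas2U h11 h21 h22 R p11 p21 p22 ∧ v = p11 + p21 + p22} =
      (Real.exp R - 1) / h11 + W R h21 h22 := by
  set E := Real.exp R with hEdef
  have hE1 : 1 < E := by
    rw [hEdef]
    calc (1:ℝ) = Real.exp 0 := Real.exp_zero.symm
    _ < Real.exp R := Real.exp_lt_exp.2 hR
  have hEpos : (0:ℝ) < E := Real.exp_pos R
  have hexp2 : Real.exp (-(2*R)) = 1/(E*E) := by
    rw [Real.exp_neg, two_mul, Real.exp_add, one_div, hEdef]
  apply IsLeast.csInf_eq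
  constructor
  · -- membership: exhibit an optimal point
    show ∃ p11 p21 p22, Feas2U h11 h21 h22 R p11 p21 p22 ∧
      (E - 1) / h11 + W R h21 h22 = p11 + p21 + p22
    unfold W
    split_ifs with hc1 hc2
    · -- OMA: h21 ≤ h22
      refine ⟨(E-1)/h11, 0, (E-1)/h22, feas_aux h11 h21 h22 R 0 ((E-1)/h22) h1 h2 h3 hR
        le_rfl (div_nonneg (by linarith) h3.le) ?_, by ring⟩
      have : 1 + h22 * ((E-1)/h22) = E := by field_simp; ring
      rw [this]
      simp [hEdef]
    · -- pure NOMA: h22 ≤ e^{-2R} h21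
      refine ⟨(E-1)/h11, E*(E-1)/h21, 0, feas_aux h11 h21 h22 R (E*(E-1)/h21) 0 h1 h2 h3 hR
        (div_nonneg (mul_nonneg hEpos.le (by linarith)) h2.le) le_rfl ?_, by ring⟩
      have : h21 * (E*(E-1)/h21) / E = E - 1 := by field_simp
      rw [this]
      simp [hEdef]
    · -- hybrid
      push_neg at hc1 hc2
      rw [hexp2] at hc2
      have hS : (0:ℝ) < Real.sqrt (h21*h22) := Real.sqrt_pos.2 (by positivity)
      have hSsq : Real.sqrt (h21*h22) ^ 2 = h21*h22 := Real.sq_sqrt (by positivity)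
      have e1 : Real.sqrt (h21/h22) = h21 / Real.sqrt (h21*h22) := by
        rw [eq_div_iff hS.ne', ← Real.sqrt_mul (by positivity),
          show h21/h22*(h21*h22) = h21^2 by field_simp, Real.sqrt_sq h2.le]
      have e2 : Real.sqrt (h22/h21) = h22 / Real.sqrt (h21*h22) := by
        rw [eq_div_iff hS.ne', ← Real.sqrt_mul (by positivity),
          show h22/h21*(h21*h22) = h22^2 by field_simp, Real.sqrt_sq h3.le]
      set S := Real.sqrt (h21*h22) with hSdef
      have hSlt : S < h21 := by
        nlinarith [hSsq, hS]
      have hlt : h21 < E*E*h22 := by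
        have h5 := mul_lt_mul_of_pos_left hc2 (mul_pos hEpos hEpos)
        have h6 : E*E*(1/(E*E)*h21) = h21 := by field_simp
        rw [h6] at h5
        linarith
      have hSlt2 : S < E * h22 := by
        nlinarith [hSsq, hS, mul_pos hEpos h3, sq_nonneg (S - E*h22),
          mul_lt_mul_of_pos_right hlt h3]
      refine ⟨(E-1)/h11, E*(h21/S - 1)/h21, (E*h22/S - 1)/h22,
        feas_aux h11 h21 h22 R _ _ h1 h2 h3 hR ?_ ?_ ?_, ?_⟩
      · have h6 : 1 ≤ h21/S := (one_le_div hS).2 hSlt.le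
        exact div_nonneg (mul_nonneg hEpos.le (by linarith)) h2.le
      · have h6 : 1 ≤ E*h22/S := (one_le_div hS).2 hSlt2.le
        exact div_nonneg (by linarith) h3.le
      · rw [← hEdef]
        have A : 1 + h21 * (E * (h21 / S - 1) / h21) / E = h21/S := by field_simp; ring
        have B : 1 + h22 * ((E * h22 / S - 1) / h22) = E*h22/S := by field_simp; ring
        rw [A, B, div_mul_div_comm]
        rw [show h21 * (E * h22) = E * (S*S) by nlinarith [hSsq]]
        rw [mul_div_assoc, div_self (mul_pos hS hS).ne', mul_one]
      · rw [← hEdef]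
        field_simp
        ring
  · -- lower bound
    rintro v ⟨p11, p21, p22, ⟨hp11, hp21, hp22, hc1, hc2⟩, rfl⟩
    have hD1 : (0:ℝ) < 1 + h11*p11 := by nlinarith [mul_nonneg h1.le hp11]
    have hD : E ≤ 1 + h11*p11 := by
      calc E = Real.exp R := rfl
      _ ≤ Real.exp (Real.log (1 + h11*p11)) := Real.exp_le_exp.2 hc1
      _ = 1 + h11*p11 := Real.exp_log hD1
    have hp11' : (E-1)/h11 ≤ p11 := by
      rw [div_le_iff₀ h1]; nlinarith
    have ha0 : (0:ℝ) < 1 + h21*p21/(1+h11*p11) := by positivity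
    have hb0 : (0:ℝ) < 1 + h22*p22 := by positivity
    have hprod : E ≤ (1 + h21*p21/(1+h11*p11)) * (1+h22*p22) := by
      rw [← Real.log_mul ha0.ne' hb0.ne'] at hc2
      calc E = Real.exp R := rfl
      _ ≤ Real.exp (Real.log ((1 + h21*p21/(1+h11*p11)) * (1+h22*p22))) := Real.exp_le_exp.2 hc2
      _ = _ := Real.exp_log (by positivity)
    have hprod2 : E ≤ (1 + h21/E*p21) * (1 + h22*p22) := by
      refine le_trans hprod (mul_le_mul_of_nonneg_right ?_ hb0.le)
      have hmm : h21*p21/(1+h11*p11) ≤ h21*p21/E := by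
        apply div_le_div_of_nonneg_left (mul_nonneg h2.le hp21) hEpos hD
      have : h21*p21/E = h21/E*p21 := by ring
      linarith
    unfold W
    split_ifs with hcc1 hcc2
    · -- h21 ≤ h22
      have := lbA (a := h21/E) (b := h22) (K := E) h3 hE1.le hp21 hp22 hprod2
        (by rw [mul_div_cancel₀ _ hEpos.ne']; exact hcc1)
      have h4 : (E-1)/h22 ≤ p21 + p22 := by
        rw [div_le_iff₀ h3]; linarith [this]
      linarith
    · -- h22 ≤ e^{-2R} h21
      have hprod3 : E ≤ (1 + h22*p22) * (1 + h21/E*p21) := by rw [mul_comm]; exact hprod2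
      have hcond : E * h22 ≤ h21/E := by
        rw [le_div_iff₀ hEpos]
        have h5 : Real.exp (-(2*R)) * h21 * (E*E) = h21 := by
          rw [hexp2]; field_simp
        calc E*h22*E = h22*(E*E) := by ring
        _ ≤ Real.exp (-(2*R))*h21*(E*E) :=
          mul_le_mul_of_nonneg_right hcc2 (mul_pos hEpos hEpos).le
        _ = h21 := h5
      have := lbA (a := h22) (b := h21/E) (K := E) (by positivity) hE1.le hp22 hp21 hprod3 hcond
      have h4 : E*(E-1)/h21 ≤ p21 + p22 := by
        rw [div_le_iff₀ h2]
        have h7 := mul_le_mul_of_nonneg_right this hEpos.le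
        have hEE : h21/E*(p22+p21)*E = h21*(p22+p21) := by
          rw [div_mul_eq_mul_div, div_mul_cancel₀ _ hEpos.ne']
        rw [hEE] at h7
        linarith
      linarith
    · -- hybrid
      have := lbB (a := h21/E) (b := h22) (K := E) (by positivity) h3
        (by positivity) (by positivity) hprod2
      have harg : E/(h21/E*h22) = E^2/(h21*h22) := by
        rw [div_mul_eq_mul_div, div_div_eq_mul_div, ← pow_two]
      have hsqrt : Real.sqrt (E^2/(h21*h22)) = E/Real.sqrt (h21*h22) := by
        rw [show E^2/(h21*h22) = (E/Real.sqrt (h21*h22))^2 by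
            rw [div_pow, Real.sq_sqrt (le_of_lt (by positivity : (0:ℝ) < h21*h22))],
          Real.sqrt_sq (by positivity)]
      rw [harg, hsqrt, one_div_div] at this
      have hS : (0:ℝ) < Real.sqrt (h21*h22) := Real.sqrt_pos.2 (by positivity)
      have : 2*E/Real.sqrt (h21*h22) - E/h21 - 1/h22 ≤ p21 + p22 := by
        have e3 : 2*(E/Real.sqrt (h21*h22)) = 2*E/Real.sqrt (h21*h22) := by ring
        linarith [this, e3.ge]
      linarith
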